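/- Let n ≥ 2 and let H be an n × n real matrix with entries in {±1}, satisfying H Hᵀ = n·I, whose first row (row index 0) consists solely of 1s. For 0 ≤ i ≤ n−1, define e_i = (1/√(n−1)) · (H(j,i))_{1 ≤ j ≤ n−1} ∈ ℝ^{n−1}. Then (e_i)_{i=0}^{n−1} is a tight frame for ℝ^{n−1} with frame bound n/(n−1): for every x ∈ ℝ^{n−1}, ∑_{i=0}^{n−1} ⟨x, e_i⟩ e_i = (n/(n−1)) x. -/

import Mathlib

open scoped InnerProductSpace

/-- The normalized truncated columns of a normalized `n × n` Hadamard matrix form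
a tight frame for `ℝ^{n−1}` with frame bound `n/(n−1)`. -/
theorem stmt_6 (n : ℕ) (hn : 2 ≤ n) (H : Matrix (Fin n) (Fin n) ℝ)
    (hentries : ∀ i j, H i j = 1 ∨ H i j = -1)
    (hHad : H * H.transpose = (n : ℝ) • 1)
    (hrow : ∀ k : Fin n, H ⟨0, by omega⟩ k = 1)
    (e : Fin n → EuclideanSpace ℝ (Fin (n - 1)))
    (he : ∀ i : Fin n, ∀ j : Fin (n - 1),
      e i j = (1 / Real.sqrt ((n : ℝ) - 1)) * H ⟨j.val + 1, by omega⟩ i) :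
    ∀ x : EuclideanSpace ℝ (Fin (n - 1)),
      (∑ i : Fin n, ⟪x, e i⟫_ℝ • e i) = ((n : ℝ) / ((n : ℝ) - 1)) • x := by
  intro x
  have hpos : (0:ℝ) < (n:ℝ) - 1 := by
    have h2 : (2:ℝ) ≤ (n:ℝ) := by exact_mod_cast hn
    linarith
  have hs : Real.sqrt ((n:ℝ)-1) * Real.sqrt ((n:ℝ)-1) = (n:ℝ)-1 :=
    Real.mul_self_sqrt hpos.le
  have key : ∀ a b : Fin n, (∑ i, H a i * H b i) = if a = b then (n:ℝ) else 0 := by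
    intro a b
    have h := congrFun (congrFun hHad a) b
    simpa [Matrix.mul_apply, Matrix.transpose_apply, Matrix.one_apply,
      Matrix.smul_apply] using h
  set c : ℝ := 1 / Real.sqrt ((n:ℝ)-1) with hc
  ext k
  have lhs : (∑ i : Fin n, ⟪x, e i⟫_ℝ • e i) k
      = ∑ i : Fin n, (∑ j : Fin (n-1), x j * (c * H ⟨j.val+1, by omega⟩ i))
          * (c * H ⟨k.val+1, by omega⟩ i) := by
    have h0 : (∑ i : Fin n, ⟪x, e i⟫_ℝ • e i) k = ∑ i : Fin n, (⟪x, e i⟫_ℝ • e i) k :=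
      by rw [WithLp.ofLp_sum, Finset.sum_apply]
    rw [h0]
    simp only [PiLp.smul_apply, smul_eq_mul, PiLp.inner_apply,
      RCLike.inner_apply, starRingEnd_apply, star_trivial, he]
    apply Finset.sum_congr rfl; intro i _; congr 1; apply Finset.sum_congr rfl; intro j _; ring
  rw [lhs]
  have swap : ∑ i : Fin n, (∑ j : Fin (n-1), x j * (c * H ⟨j.val+1, by omega⟩ i))
          * (c * H ⟨k.val+1, by omega⟩ i)
      = ∑ j : Fin (n-1), (x j * (c*c)) * ∑ i : Fin n,
          H ⟨j.val+1, by omega⟩ i * H ⟨k.val+1, by omega⟩ i := by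
    simp only [Finset.sum_mul]
    rw [Finset.sum_comm]
    simp only [Finset.mul_sum]
    congr 1; funext j; congr 1; funext i; ring
  rw [swap]
  have hdelta : ∀ j : Fin (n-1),
      (∑ i : Fin n, H ⟨j.val+1, by omega⟩ i * H ⟨k.val+1, by omega⟩ i)
        = if j = k then (n:ℝ) else 0 := by
    intro j
    rw [key]
    congr 1
    simp only [Fin.mk.injEq, eq_iff_iff]
    constructor
    · intro h; exact Fin.ext (by omega)
    · intro h; rw [h]
  have hcc : c * c = 1 / ((n:ℝ)-1) := by
    rw [hc, div_mul_div_comm, hs, one_mul]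
  simp only [hdelta, mul_ite, mul_zero, Finset.sum_ite_eq', Finset.mem_univ, if_true,
    hcc, PiLp.smul_apply, smul_eq_mul]
  ring
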